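/- Let P, Q ∈ ℝ[X₁,...,X_n][X] be polynomials whose total degrees, viewed as polynomials in the n+1 variables X₁,...,X_n,X, are p and q respectively. Then the total degree of Res_X(P,Q) ∈ ℝ[X₁,...,X_n] is at most p·q. -/

import Mathlib

open Polynomial

/-- The Sylvester matrix of two polynomials `P`, `Q` over a commutative ring, a square
matrix of size `deg P + deg Q`: the first `deg Q` rows are shifts of the coefficients of
`P`, the remaining `deg P` rows are shifts of the coefficients of `Q`. -/
noncomputable def sylvesterMatrix {A : Type*} [CommRing A] (P Q : Polynomial A) :
    Matrix (Fin (P.natDegree + Q.natDegree)) (Fin (P.natDegree + Q.natDegree)) A :=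
  Matrix.of fun i j =>
    if (i : ℕ) < Q.natDegree then
      (if (i : ℕ) ≤ (j : ℕ) ∧ (j : ℕ) ≤ (i : ℕ) + P.natDegree
        then P.coeff ((j : ℕ) - (i : ℕ)) else 0)
    else
      (if (i : ℕ) - Q.natDegree ≤ (j : ℕ) ∧ (j : ℕ) ≤ ((i : ℕ) - Q.natDegree) + Q.natDegree
        then Q.coeff ((j : ℕ) - ((i : ℕ) - Q.natDegree)) else 0)

/-- The resultant `Res_X(P,Q)`: the determinant of the Sylvester matrix. -/
noncomputable def resultant {A : Type*} [CommRing A] (P Q : Polynomial A) : A :=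
  (sylvesterMatrix P Q).det

/-- The total degree of `P ∈ ℝ[X₁,...,X_n][X]`, viewed as a polynomial in the `n+1`
variables `X₁,...,X_n,X`. -/
noncomputable def totalDeg {n : ℕ} (P : Polynomial (MvPolynomial (Fin n) ℝ)) : ℕ :=
  P.support.sup fun i => i + (P.coeff i).totalDegree

lemma coeff_totalDeg_le {n : ℕ} (P : Polynomial (MvPolynomial (Fin n) ℝ)) (k : ℕ)
    (h : P.coeff k ≠ 0) : k + (P.coeff k).totalDegree ≤ totalDeg P := by
  unfold totalDeg
  exact Finset.le_sup (f := fun i => i + (P.coeff i).totalDegree)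
    (Polynomial.mem_support_iff.mpr h)

lemma natDegree_le_totalDeg {n : ℕ} (P : Polynomial (MvPolynomial (Fin n) ℝ)) :
    P.natDegree ≤ totalDeg P := by
  by_cases h : P = 0
  · simp [h, totalDeg]
  · exact le_trans (Nat.le_add_right _ _)
      (coeff_totalDeg_le P P.natDegree (mt Polynomial.leadingCoeff_eq_zero.mp h))

/-- If `P, Q ∈ ℝ[X₁,...,X_n][X]` have total degrees `p` and `q` in the `n+1` variables
`X₁,...,X_n,X`, then the total degree of `Res_X(P,Q) ∈ ℝ[X₁,...,X_n]` is at most `p·q`. -/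
theorem totalDegree_resultant_le {n : ℕ} (P Q : Polynomial (MvPolynomial (Fin n) ℝ))
    (p q : ℕ) (hp : totalDeg P = p) (hq : totalDeg Q = q) :
    (_root_.resultant P Q).totalDegree ≤ p * q := by
  subst hp hq
  have hdPp : P.natDegree ≤ totalDeg P := natDegree_le_totalDeg P
  have hdQq : Q.natDegree ≤ totalDeg Q := natDegree_le_totalDeg Q
  set B : Fin (P.natDegree + Q.natDegree) → ℕ := fun r =>
    if (r : ℕ) < Q.natDegree then totalDeg P + (r : ℕ)
    else totalDeg Q + ((r : ℕ) - Q.natDegree) with hB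
  -- entry bound
  have entry : ∀ r c : Fin (P.natDegree + Q.natDegree), sylvesterMatrix P Q r c ≠ 0 →
      (sylvesterMatrix P Q r c).totalDegree + (c : ℕ) ≤ B r := by
    intro r c h
    simp only [sylvesterMatrix, Matrix.of_apply] at h ⊢
    by_cases hr : (r : ℕ) < Q.natDegree
    · rw [if_pos hr] at h ⊢
      by_cases hc : (r : ℕ) ≤ (c : ℕ) ∧ (c : ℕ) ≤ (r : ℕ) + P.natDegree
      · rw [if_pos hc] at h ⊢
        have := coeff_totalDeg_le P ((c : ℕ) - r) h
        simp only [hB, if_pos hr]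
        omega
      · rw [if_neg hc] at h; exact absurd rfl h
    · rw [if_neg hr] at h ⊢
      by_cases hc : (r : ℕ) - Q.natDegree ≤ (c : ℕ) ∧
          (c : ℕ) ≤ ((r : ℕ) - Q.natDegree) + Q.natDegree
      · rw [if_pos hc] at h ⊢
        have := coeff_totalDeg_le Q ((c : ℕ) - ((r : ℕ) - Q.natDegree)) h
        simp only [hB, if_neg hr]
        omega
      · rw [if_neg hc] at h; exact absurd rfl h
  -- sum of B
  have sumB : ∑ r, B r ≤ totalDeg P * totalDeg Q + ∑ r : Fin (P.natDegree + Q.natDegree), (r : ℕ) := by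
    have h2 : ∑ r, B r = ∑ j ∈ Finset.range (P.natDegree + Q.natDegree),
        (if j < Q.natDegree then totalDeg P + j else totalDeg Q + (j - Q.natDegree)) := by
      rw [← Fin.sum_univ_eq_sum_range]
    have h3 : ∑ r : Fin (P.natDegree + Q.natDegree), (r : ℕ)
        = ∑ j ∈ Finset.range (P.natDegree + Q.natDegree), j :=
      Fin.sum_univ_eq_sum_range (fun j => j) _
    rw [h2, h3]
    have hsplit : ∀ f : ℕ → ℕ, ∑ j ∈ Finset.range (P.natDegree + Q.natDegree), f j
        = ∑ j ∈ Finset.range Q.natDegree, f j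
          + ∑ j ∈ Finset.range P.natDegree, f (Q.natDegree + j) := by
      intro f
      rw [Nat.add_comm P.natDegree Q.natDegree, Finset.sum_range_add]
    rw [hsplit, hsplit (fun j => j)]
    have e1 : ∑ j ∈ Finset.range Q.natDegree,
        (if j < Q.natDegree then totalDeg P + j else totalDeg Q + (j - Q.natDegree))
        = Q.natDegree * totalDeg P + ∑ j ∈ Finset.range Q.natDegree, j := by
      rw [Finset.sum_congr rfl (fun j hj => if_pos (Finset.mem_range.mp hj)),
        Finset.sum_add_distrib, Finset.sum_const, Finset.card_range, smul_eq_mul]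
    have e2 : ∑ j ∈ Finset.range P.natDegree,
        (if Q.natDegree + j < Q.natDegree then totalDeg P + (Q.natDegree + j)
          else totalDeg Q + (Q.natDegree + j - Q.natDegree))
        = P.natDegree * totalDeg Q + ∑ j ∈ Finset.range P.natDegree, j := by
      have : ∀ j, (if Q.natDegree + j < Q.natDegree then totalDeg P + (Q.natDegree + j)
          else totalDeg Q + (Q.natDegree + j - Q.natDegree)) = totalDeg Q + j := by
        intro j; rw [if_neg (by omega)]; omega
      rw [Finset.sum_congr rfl (fun j _ => this j), Finset.sum_add_distrib,
        Finset.sum_const, Finset.card_range, smul_eq_mul]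
    have e3 : ∑ j ∈ Finset.range P.natDegree, (Q.natDegree + j)
        = P.natDegree * Q.natDegree + ∑ j ∈ Finset.range P.natDegree, j := by
      rw [Finset.sum_add_distrib, Finset.sum_const, Finset.card_range, smul_eq_mul]
    rw [e1, e2, e3]
    obtain ⟨a, ha⟩ := Nat.exists_eq_add_of_le hdPp
    obtain ⟨b, hb⟩ := Nat.exists_eq_add_of_le hdQq
    rw [ha, hb]
    nlinarith [sq_nonneg a, sq_nonneg b]
  -- main
  rw [_root_.resultant, Matrix.det_apply]
  refine (MvPolynomial.totalDegree_finset_sum _ _).trans (Finset.sup_le fun σ _ => ?_)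
  refine (MvPolynomial.totalDegree_smul_le _ _).trans ?_
  by_cases hz : ∃ i, sylvesterMatrix P Q (σ i) i = 0
  · obtain ⟨i, hi⟩ := hz
    have : (∏ i, sylvesterMatrix P Q (σ i) i) = 0 :=
      Finset.prod_eq_zero (Finset.mem_univ i) hi
    rw [this]
    simp
  · push_neg at hz
    refine (MvPolynomial.totalDegree_finset_prod _ _).trans ?_
    have key : ∑ i, (sylvesterMatrix P Q (σ i) i).totalDegree
        + ∑ i : Fin (P.natDegree + Q.natDegree), (i : ℕ) ≤ ∑ r, B r := by
      rw [← Finset.sum_add_distrib]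
      calc ∑ i, ((sylvesterMatrix P Q (σ i) i).totalDegree + (i : ℕ))
          ≤ ∑ i, B (σ i) := Finset.sum_le_sum fun i _ => entry (σ i) i (hz i)
        _ = ∑ r, B r := Equiv.sum_comp σ B
    omega
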